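/- arXiv:2101.04962 — 2 statements merged into one kernel-verified Lean document; each statement's English description precedes it below -/
import Mathlib

section
/- Let W be a unitary matrix on ℂ^n ⊗ ℂ^m, let (W_ψ) be a family of unitary n×n matrices indexed by the unit vectors ψ ∈ ℂ^m, and let J be a state space symmetry of the density matrices on ℂ^m, such that for all unit vectors φ ∈ ℂ^n and ψ ∈ ℂ^m: W (|φ⟩⟨φ| ⊗ |ψ⟩⟨ψ|) W† = (W_ψᵀ |φ⟩⟨φ| \overline{W_ψ}) ⊗ J(|ψ⟩⟨ψ|), where \overline{W_ψ} = (W_ψᵀ)† is the entrywise conjugate. Then the conjugation by W_ψᵀ is independent of ψ: for all unit vectors ψ, ψ' ∈ ℂ^m and every unit vector φ ∈ ℂ^n, W_ψᵀ |φ⟩⟨φ| \overline{W_ψ} = W_{ψ'}ᵀ |φ⟩⟨φ| \overline{W_{ψ'}}. -/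
open scoped ComplexOrder Kronecker
open Matrix

noncomputable section

/-- The space of linear maps from `m × m` complex matrices to `n × n` complex matrices. -/
abbrev MatMap (m n : ℕ) := Matrix (Fin m) (Fin m) ℂ →ₗ[ℂ] Matrix (Fin n) (Fin n) ℂ

/-- The Choi matrix `Choi(Q) = Σ_{i,j} Q(E_{ij}) ⊗ E_{ij}` of a linear map between
matrix spaces. -/
def choi {m n : ℕ} (Q : MatMap m n) : Matrix (Fin n × Fin m) (Fin n × Fin m) ℂ :=
  Matrix.of fun p q => Q (Matrix.single p.2 q.2 1) p.1 q.1

/-- A linear map is completely positive if its Choi matrix is positive semidefinite. -/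
def IsCP {m n : ℕ} (Q : MatMap m n) : Prop := (choi Q).PosSemidef

/-- A quantum operation: a completely positive trace-non-increasing linear map. -/
def IsQOp {m n : ℕ} (Q : MatMap m n) : Prop :=
  IsCP Q ∧ ∀ ρ : Matrix (Fin m) (Fin m) ℂ, ρ.PosSemidef → (Q ρ).trace ≤ ρ.trace

/-- A quantum channel: a completely positive trace-preserving linear map. -/
def IsChannel {m n : ℕ} (Q : MatMap m n) : Prop :=
  IsCP Q ∧ ∀ ρ : Matrix (Fin m) (Fin m) ℂ, (Q ρ).trace = ρ.trace

/-- A density matrix: positive semidefinite with unit trace. -/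
def IsDensity {ι : Type*} [Fintype ι] (ρ : Matrix ι ι ℂ) : Prop :=
  ρ.PosSemidef ∧ ρ.trace = 1

/-- A rank-one orthogonal projection `|ψ⟩⟨ψ|` for a unit vector `ψ`. -/
def IsRankOneProj {d : ℕ} (P : Matrix (Fin d) (Fin d) ℂ) : Prop :=
  ∃ ψ : Fin d → ℂ, star ψ ⬝ᵥ ψ = 1 ∧ P = Matrix.vecMulVec ψ (star ψ)

/-- A state space symmetry: a bijection between the sets of density matrices that
preserves convex combinations. -/
def IsStateSymmetry {ι κ : Type*} [Fintype ι] [Fintype κ]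
    (S : Matrix ι ι ℂ → Matrix κ κ ℂ) : Prop :=
  Set.BijOn S {ρ | IsDensity ρ} {ρ | IsDensity ρ} ∧
  ∀ ρ σ : Matrix ι ι ℂ, IsDensity ρ → IsDensity σ → ∀ p : ℝ, 0 ≤ p → p ≤ 1 →
    S ((p : ℂ) • ρ + ((1 - p : ℝ) : ℂ) • σ) = (p : ℂ) • S ρ + ((1 - p : ℝ) : ℂ) • S σ

/-- An operation space symmetry: a bijection between the sets of quantum operations that
preserves convex combinations and maps the zero map to the zero map. -/
def IsOpSymmetry {m n m' n' : ℕ} (S : MatMap m n → MatMap m' n') : Prop :=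
  Set.BijOn S {Q | IsQOp Q} {Q | IsQOp Q} ∧
  (∀ Q R : MatMap m n, IsQOp Q → IsQOp R → ∀ p : ℝ, 0 ≤ p → p ≤ 1 →
    S ((p : ℂ) • Q + ((1 - p : ℝ) : ℂ) • R) = (p : ℂ) • S Q + ((1 - p : ℝ) : ℂ) • S R) ∧
  S 0 = 0

/-- Transport of a square matrix along an equality of dimensions. -/
def castMat {m n : ℕ} (h : m = n) (A : Matrix (Fin m) (Fin m) ℂ) :
    Matrix (Fin n) (Fin n) ℂ :=
  Matrix.reindex (finCongr h) (finCongr h) A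

/-- The unitary channel `ρ ↦ U ρ U†` as a linear map. -/
def adjAction {d : ℕ} (U : Matrix (Fin d) (Fin d) ℂ) : MatMap d d where
  toFun ρ := U * ρ * Uᴴ
  map_add' x y := by simp [Matrix.mul_add, Matrix.add_mul]
  map_smul' c x := by simp [Matrix.mul_smul, Matrix.smul_mul]

/-- The Hilbert–Schmidt adjoint of a linear map between matrix spaces; it is the unique
linear map satisfying `Tr[A† Q(B)] = Tr[(Q†(A))† B]` for all `A`, `B`. -/
def hsAdjoint {m n : ℕ} (Q : MatMap m n) : MatMap n m where
  toFun A := Matrix.of fun i j => ((Q (Matrix.single i j 1))ᴴ * A).trace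
  map_add' A B := by
    ext i j
    simp [Matrix.mul_add, Matrix.trace_add]
  map_smul' c A := by
    ext i j
    simp [Matrix.mul_smul, Matrix.trace_smul]

open scoped Classical in
/-- The positive semidefinite square root (junk value `0` on non-psd inputs). -/
noncomputable def psqrt {d : ℕ} (M : Matrix (Fin d) (Fin d) ℂ) : Matrix (Fin d) (Fin d) ℂ :=
  if h : M.PosSemidef then
    (h.1.eigenvectorUnitary : Matrix (Fin d) (Fin d) ℂ) *
      Matrix.diagonal ((↑) ∘ (Real.sqrt ·) ∘ h.1.eigenvalues) *
      (star h.1.eigenvectorUnitary : Matrix (Fin d) (Fin d) ℂ) else 0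

/-- The fidelity `F(ρ,σ) = (Tr[√(√ρ σ √ρ)])²` of two density matrices. -/
noncomputable def fidelity {d : ℕ} (ρ σ : Matrix (Fin d) (Fin d) ℂ) : ℝ :=
  ((psqrt (psqrt ρ * σ * psqrt ρ)).trace.re) ^ 2

/-- The double transpose `ρ ↦ [Φ(ρᵀ)]ᵀ` of a linear map between matrix spaces. -/
def doubleTransposeMap {m n : ℕ} (Φ : MatMap m n) : MatMap m n where
  toFun ρ := (Φ ρᵀ)ᵀ
  map_add' x y := by simp
  map_smul' c x := by simp

/-- A time symmetric quantum operation: completely positive, with `Q†(I_n) ≤ I_m`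
and `Q(I_m/m) ≤ I_n/n` in the Loewner order. -/
def IsTSOp {m n : ℕ} (Q : MatMap m n) : Prop :=
  IsCP Q ∧ ((1 : Matrix (Fin m) (Fin m) ℂ) - hsAdjoint Q 1).PosSemidef ∧
    ((n : ℂ)⁻¹ • (1 : Matrix (Fin n) (Fin n) ℂ)
      - Q ((m : ℂ)⁻¹ • (1 : Matrix (Fin m) (Fin m) ℂ))).PosSemidef


private lemma sandwich_outer' {ι κ : Type*} [Fintype κ] (T : Matrix ι κ ℂ) (x y : κ → ℂ) :
    T * vecMulVec x (star y) * Tᴴ = vecMulVec (T *ᵥ x) (star (T *ᵥ y)) := by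
  ext i j
  simp only [mul_apply, vecMulVec_apply, conjTranspose_apply, mulVec, dotProduct,
    Pi.star_apply, Finset.sum_mul, Finset.mul_sum, star_sum, star_mul']
  apply Finset.sum_congr rfl; intro a _
  apply Finset.sum_congr rfl; intro b _
  ring

private lemma dot_mulVec_self' {ι κ : Type*} [Fintype ι] [Fintype κ] [DecidableEq κ]
    (T : Matrix ι κ ℂ) (hT : Tᴴ * T = 1) (x : κ → ℂ) :
    star (T *ᵥ x) ⬝ᵥ (T *ᵥ x) = star x ⬝ᵥ x := by
  rw [star_mulVec, dotProduct_mulVec, vecMul_vecMul, hT, vecMul_one]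

private lemma outer_isDensity' {d : ℕ} (ψ : Fin d → ℂ) (hψ : star ψ ⬝ᵥ ψ = 1) :
    IsDensity (vecMulVec ψ (star ψ)) := by
  constructor
  · rw [posSemidef_iff_dotProduct_mulVec]; constructor
    · ext i j
      simp [vecMulVec_apply, conjTranspose_apply, mul_comm]
    · intro x
      have : star x ⬝ᵥ (vecMulVec ψ (star ψ)) *ᵥ x
          = (star x ⬝ᵥ ψ) * star (star x ⬝ᵥ ψ) := by
        simp only [dotProduct, mulVec, vecMulVec_apply, Pi.star_apply, star_sum, star_mul',
          Finset.mul_sum, Finset.sum_mul]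
        rw [Finset.sum_comm]
        apply Finset.sum_congr rfl; intro a _
        apply Finset.sum_congr rfl; intro b _
        simp; ring
      rw [this]
      exact mul_star_self_nonneg _
  · have : (vecMulVec ψ (star ψ)).trace = star ψ ⬝ᵥ ψ := by
      simp [trace, diag, vecMulVec_apply, dotProduct, mul_comm]
    rw [this, hψ]

private lemma exists_ne_zero_of_dot_one' {d : ℕ} (u : Fin d → ℂ) (hu : star u ⬝ᵥ u = 1) :
    ∃ i, u i ≠ 0 := by
  by_contra hc
  push_neg at hc
  have : star u ⬝ᵥ u = 0 := by simp [dotProduct, hc]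
  rw [hu] at this; exact one_ne_zero this

private lemma factor_aux' {m n : ℕ} (u : Fin n → ℂ) (hu : star u ⬝ᵥ u = 1)
    (Jψ : Matrix (Fin m) (Fin m) ℂ) (hJtr : Jψ.trace = 1)
    (F : Fin n × Fin m → ℂ)
    (hF : ∀ p q, F p * star (F q) = u p.1 * star (u q.1) * Jψ p.2 q.2) :
    ∃ v : Fin m → ℂ, star v ⬝ᵥ v = 1 ∧ (∀ p, F p = u p.1 * v p.2) ∧
      Jψ = vecMulVec v (star v) := by
  obtain ⟨i₀, hi₀⟩ := exists_ne_zero_of_dot_one' u hu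
  set v : Fin m → ℂ := fun k => F (i₀, k) / u i₀ with hv
  have hstar : star (u i₀) ≠ 0 := star_ne_zero.mpr hi₀
  have hJv : ∀ k l, Jψ k l = v k * star (v l) := by
    intro k l
    have h := hF (i₀, k) (i₀, l)
    simp only at h
    have hvs : v k * star (v l) = (F (i₀, k) * star (F (i₀, l))) / (u i₀ * star (u i₀)) := by
      simp only [hv, star_div₀]
      rw [div_mul_div_comm]
    rw [hvs, h]
    exact (mul_div_cancel_left₀ _ (mul_ne_zero hi₀ hstar)).symm
  have hvdot : star v ⬝ᵥ v = 1 := by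
    have : star v ⬝ᵥ v = Jψ.trace := by
      simp only [dotProduct, trace, diag]
      apply Finset.sum_congr rfl; intro k _
      rw [hJv k k]; simp; ring
    rw [this, hJtr]
  obtain ⟨l₀, hl₀⟩ := exists_ne_zero_of_dot_one' v hvdot
  have hFil : F (i₀, l₀) = u i₀ * v l₀ := by
    simp only [hv]; field_simp
  refine ⟨v, hvdot, ?_, ?_⟩
  · intro p
    have h1 := hF p (i₀, l₀)
    rw [hFil, hJv p.2 l₀] at h1
    have hne : star (u i₀ * v l₀) ≠ 0 := star_ne_zero.mpr (mul_ne_zero hi₀ hl₀)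
    apply mul_right_cancel₀ hne
    rw [h1, star_mul']
    ring
  · ext k l
    rw [hJv k l]; simp [vecMulVec_apply]

private lemma kron_outer' {m n : ℕ} (φ : Fin n → ℂ) (ψ : Fin m → ℂ) :
    vecMulVec φ (star φ) ⊗ₖ vecMulVec ψ (star ψ)
      = vecMulVec (fun p : Fin n × Fin m => φ p.1 * ψ p.2)
          (star fun p : Fin n × Fin m => φ p.1 * ψ p.2) := by
  ext p q
  simp [kroneckerMap_apply, vecMulVec_apply, star_mul']
  ring

private lemma smul_unit' {d : ℕ} (v : Fin d → ℂ) (c : ℂ) (hv : star v ⬝ᵥ v = 1)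
    (hv' : star (c • v) ⬝ᵥ (c • v) = 1) : star c * c = 1 := by
  rw [star_smul, smul_dotProduct, dotProduct_smul, hv] at hv'
  simpa [smul_eq_mul] using hv'

/-- If a unitary `W` on `ℂ^n ⊗ ℂ^m` factorizes on pure product states as
`W(|φ⟩⟨φ| ⊗ |ψ⟩⟨ψ|)W† = (W_ψᵀ |φ⟩⟨φ| (W_ψᵀ)†) ⊗ J(|ψ⟩⟨ψ|)` for a family of unitaries
`W_ψ` and a state space symmetry `J`, then the conjugation by `W_ψᵀ` is independent
of `ψ`. -/
theorem sandwich_unitary_independent (m n : ℕ)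
    (W : Matrix (Fin n × Fin m) (Fin n × Fin m) ℂ)
    (hW : W ∈ Matrix.unitaryGroup (Fin n × Fin m) ℂ)
    (Wfam : (Fin m → ℂ) → Matrix (Fin n) (Fin n) ℂ)
    (hWfam : ∀ ψ : Fin m → ℂ, star ψ ⬝ᵥ ψ = 1 → Wfam ψ ∈ Matrix.unitaryGroup (Fin n) ℂ)
    (J : Matrix (Fin m) (Fin m) ℂ → Matrix (Fin m) (Fin m) ℂ)
    (hJ : IsStateSymmetry J)
    (h : ∀ (φ : Fin n → ℂ) (ψ : Fin m → ℂ), star φ ⬝ᵥ φ = 1 → star ψ ⬝ᵥ ψ = 1 →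
      W * (Matrix.vecMulVec φ (star φ) ⊗ₖ Matrix.vecMulVec ψ (star ψ)) * Wᴴ
        = ((Wfam ψ)ᵀ * Matrix.vecMulVec φ (star φ) * ((Wfam ψ)ᵀ)ᴴ)
            ⊗ₖ J (Matrix.vecMulVec ψ (star ψ))) :
    ∀ ψ ψ' : Fin m → ℂ, star ψ ⬝ᵥ ψ = 1 → star ψ' ⬝ᵥ ψ' = 1 →
      ∀ φ : Fin n → ℂ, star φ ⬝ᵥ φ = 1 →
        (Wfam ψ)ᵀ * Matrix.vecMulVec φ (star φ) * ((Wfam ψ)ᵀ)ᴴ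
          = (Wfam ψ')ᵀ * Matrix.vecMulVec φ (star φ) * ((Wfam ψ')ᵀ)ᴴ := by
  intro ψ ψ' hψ hψ' φ hφ
  classical
  -- general packaging for any unit vector χ
  have pack : ∀ χ : Fin m → ℂ, star χ ⬝ᵥ χ = 1 →
      ∃ v : Fin m → ℂ, star v ⬝ᵥ v = 1 ∧
        (∀ p : Fin n × Fin m, (W *ᵥ fun q : Fin n × Fin m => φ q.1 * χ q.2) p
            = ((Wfam χ)ᵀ *ᵥ φ) p.1 * v p.2) ∧
        J (vecMulVec χ (star χ)) = vecMulVec v (star v) := by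
    intro χ hχ
    have hU := hWfam χ hχ
    have h2 : Wfam χ * (Wfam χ)ᴴ = 1 := by
      have := (Matrix.mem_unitaryGroup_iff).mp hU
      rwa [Matrix.star_eq_conjTranspose] at this
    have hT : ((Wfam χ)ᵀ)ᴴ * (Wfam χ)ᵀ = 1 := by
      ext i j
      have e := Matrix.ext_iff.mpr h2 i j
      have e2 : (((Wfam χ)ᵀ)ᴴ * (Wfam χ)ᵀ) i j = star ((Wfam χ * (Wfam χ)ᴴ) i j) := by
        simp only [mul_apply, conjTranspose_apply, transpose_apply, star_sum, star_mul',
          star_star]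
        try (apply Finset.sum_congr rfl; intro k _; ring)
      rw [e2, e]
      by_cases hij : i = j <;> simp [one_apply, hij]
    have hu : star ((Wfam χ)ᵀ *ᵥ φ) ⬝ᵥ ((Wfam χ)ᵀ *ᵥ φ) = 1 := by
      rw [dot_mulVec_self' _ hT φ, hφ]
    have hmem : IsDensity (J (vecMulVec χ (star χ))) := hJ.1.mapsTo (outer_isDensity' χ hχ)
    have hmat := h φ χ hφ hχ
    rw [kron_outer' φ χ, sandwich_outer' W _ _, sandwich_outer' ((Wfam χ)ᵀ) φ φ] at hmat
    have hF : ∀ p q : Fin n × Fin m,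
        (W *ᵥ fun q : Fin n × Fin m => φ q.1 * χ q.2) p
          * star ((W *ᵥ fun q : Fin n × Fin m => φ q.1 * χ q.2) q)
        = ((Wfam χ)ᵀ *ᵥ φ) p.1 * star (((Wfam χ)ᵀ *ᵥ φ) q.1)
            * (J (vecMulVec χ (star χ))) p.2 q.2 := by
      intro p q
      have := Matrix.ext_iff.mpr hmat p q
      simpa [vecMulVec_apply, kroneckerMap_apply, mul_assoc] using this
    exact factor_aux' _ hu _ hmem.2 _ hF
  -- apply to ψ and ψ'
  obtain ⟨v, hv1, hv2, hv3⟩ := pack ψ hψ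
  obtain ⟨v', hv1', hv2', hv3'⟩ := pack ψ' hψ'
  set u : Fin n → ℂ := (Wfam ψ)ᵀ *ᵥ φ with hudef
  set u' : Fin n → ℂ := (Wfam ψ')ᵀ *ᵥ φ with hudef'
  have hU := hWfam ψ hψ
  have hU' := hWfam ψ' hψ'
  have h2 : Wfam ψ * (Wfam ψ)ᴴ = 1 := by
    have := (Matrix.mem_unitaryGroup_iff).mp hU
    rwa [Matrix.star_eq_conjTranspose] at this
  have h2' : Wfam ψ' * (Wfam ψ')ᴴ = 1 := by
    have := (Matrix.mem_unitaryGroup_iff).mp hU'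
    rwa [Matrix.star_eq_conjTranspose] at this
  have hT : ((Wfam ψ)ᵀ)ᴴ * (Wfam ψ)ᵀ = 1 := by
    ext i j
    have e := Matrix.ext_iff.mpr h2 i j
    have e2 : (((Wfam ψ)ᵀ)ᴴ * (Wfam ψ)ᵀ) i j = star ((Wfam ψ * (Wfam ψ)ᴴ) i j) := by
      simp only [mul_apply, conjTranspose_apply, transpose_apply, star_sum, star_mul',
        star_star]
      try (apply Finset.sum_congr rfl; intro k _; ring)
    rw [e2, e]
    by_cases hij : i = j <;> simp [one_apply, hij]
  have hT' : ((Wfam ψ')ᵀ)ᴴ * (Wfam ψ')ᵀ = 1 := by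
    ext i j
    have e := Matrix.ext_iff.mpr h2' i j
    have e2 : (((Wfam ψ')ᵀ)ᴴ * (Wfam ψ')ᵀ) i j = star ((Wfam ψ' * (Wfam ψ')ᴴ) i j) := by
      simp only [mul_apply, conjTranspose_apply, transpose_apply, star_sum, star_mul',
        star_star]
      try (apply Finset.sum_congr rfl; intro k _; ring)
    rw [e2, e]
    by_cases hij : i = j <;> simp [one_apply, hij]
  have hu : star u ⬝ᵥ u = 1 := by rw [hudef, dot_mulVec_self' _ hT φ, hφ]
  have hu' : star u' ⬝ᵥ u' = 1 := by rw [hudef', dot_mulVec_self' _ hT' φ, hφ]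
  -- reduce the goal to parallelism of u and u'
  rw [sandwich_outer' ((Wfam ψ)ᵀ) φ φ, sandwich_outer' ((Wfam ψ')ᵀ) φ φ, ← hudef, ← hudef']
  suffices hd : ∃ d : ℂ, u' = d • u by
    obtain ⟨d, hd⟩ := hd
    have hdd : star d * d = 1 := smul_unit' u d hu (hd ▸ hu')
    ext i j
    simp only [vecMulVec_apply, Pi.star_apply, hd, Pi.smul_apply, smul_eq_mul, star_mul']
    linear_combination (-(u i * star (u j))) * hdd
  by_cases hpar : ∃ c : ℂ, ψ' = c • ψ
  · -- parallel case: the product vectors are proportional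
    obtain ⟨c, hc⟩ := hpar
    have hxc : (fun q : Fin n × Fin m => φ q.1 * ψ' q.2)
        = c • fun q : Fin n × Fin m => φ q.1 * ψ q.2 := by
      funext q
      simp only [hc, Pi.smul_apply, smul_eq_mul]
      ring
    have hFc : ∀ p : Fin n × Fin m, u' p.1 * v' p.2 = c * (u p.1 * v p.2) := by
      intro p
      rw [← hv2' p, hxc, mulVec_smul]
      simp only [Pi.smul_apply, smul_eq_mul]
      rw [hv2 p]
    obtain ⟨l₀, hl₀⟩ := exists_ne_zero_of_dot_one' v' hv1'
    refine ⟨c * v l₀ / v' l₀, ?_⟩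
    funext i
    have e := hFc (i, l₀)
    simp only at e
    simp only [Pi.smul_apply, smul_eq_mul]
    rw [div_mul_eq_mul_div, eq_div_iff hl₀]
    linear_combination e
  · by_cases hvpar : ∃ c : ℂ, v' = c • v
    · -- impossible: J would not be injective on densities
      exfalso
      obtain ⟨c, hcv⟩ := hvpar
      have hcc : star c * c = 1 := smul_unit' v c hv1 (hcv ▸ hv1')
      have houter : vecMulVec v' (star v') = vecMulVec v (star v) := by
        ext k l
        simp only [hcv, vecMulVec_apply, Pi.star_apply, Pi.smul_apply, smul_eq_mul, star_mul']
        linear_combination (v k * star (v l)) * hcc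
      have hJeq : J (vecMulVec ψ (star ψ)) = J (vecMulVec ψ' (star ψ')) := by
        rw [hv3, hv3', houter]
      have hPeq : vecMulVec ψ (star ψ) = vecMulVec ψ' (star ψ') :=
        hJ.1.injOn (outer_isDensity' ψ hψ) (outer_isDensity' ψ' hψ') hJeq
      obtain ⟨l₀, hl₀⟩ := exists_ne_zero_of_dot_one' ψ' hψ'
      have hdiag : ψ l₀ * star (ψ l₀) = ψ' l₀ * star (ψ' l₀) := by
        have := Matrix.ext_iff.mpr hPeq l₀ l₀
        simpa [vecMulVec_apply] using this
      have hψl₀ : ψ l₀ ≠ 0 := by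
        intro h0
        rw [h0] at hdiag
        simp [eq_comm] at hdiag
        rcases hdiag with h0 | h0
        · exact hl₀ h0
        · exact hl₀ (by simpa using h0.symm)
      have hsl₀ : star (ψ' l₀) ≠ 0 := star_ne_zero.mpr hl₀
      refine hpar ⟨star (ψ l₀) / star (ψ' l₀), ?_⟩
      funext k
      have hkk := Matrix.ext_iff.mpr hPeq k l₀
      simp only [vecMulVec_apply, Pi.star_apply] at hkk
      simp only [Pi.smul_apply, smul_eq_mul]
      rw [div_mul_eq_mul_div, eq_div_iff hsl₀]
      linear_combination -hkk
    · -- genuinely independent case: use the superposition ψ + ψ'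
      have hχne : (ψ + ψ' : Fin m → ℂ) ≠ 0 := by
        intro h0
        apply hpar
        refine ⟨-1, ?_⟩
        funext k
        have hk := congrFun h0 k
        simp only [Pi.add_apply, Pi.zero_apply] at hk
        simp only [Pi.smul_apply, smul_eq_mul]
        linear_combination hk
      set χ : Fin m → ℂ := ψ + ψ' with hχdef
      set R : ℝ := ∑ k, Complex.normSq (χ k) with hRdef
      have hdotχ : star χ ⬝ᵥ χ = (R : ℂ) := by
        simp only [dotProduct, Pi.star_apply, hRdef]
        push_cast
        exact Finset.sum_congr rfl fun k _ => by
          rw [mul_comm, RCLike.star_def, Complex.mul_conj]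
      have hRpos : 0 < R := by
        obtain ⟨k, hk⟩ : ∃ k, χ k ≠ 0 := by
          by_contra hcz
          push_neg at hcz
          exact hχne (funext hcz)
        exact Finset.sum_pos' (fun k _ => Complex.normSq_nonneg _)
          ⟨k, Finset.mem_univ k, Complex.normSq_pos.mpr hk⟩
      set sR : ℝ := Real.sqrt R with hsdef
      have hspos : 0 < sR := Real.sqrt_pos.mpr hRpos
      have hsne : (sR : ℂ) ≠ 0 := by
        exact_mod_cast ne_of_gt hspos
      have hs2 : (sR : ℂ) * (sR : ℂ) = (R : ℂ) := by
        norm_cast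
        exact Real.mul_self_sqrt hRpos.le
      set ch : Fin m → ℂ := ((sR : ℂ))⁻¹ • χ with hchdef
      have hchunit : star ch ⬝ᵥ ch = 1 := by
        rw [hchdef, star_smul, smul_dotProduct, dotProduct_smul, hdotχ]
        simp only [smul_eq_mul, star_inv₀, RCLike.star_def, Complex.conj_ofReal]
        field_simp
        linear_combination -hs2
      obtain ⟨v'', hv1'', hv2'', hv3''⟩ := pack ch hchunit
      set u'' : Fin n → ℂ := (Wfam ch)ᵀ *ᵥ φ with hu''def
      have rel : ∀ p : Fin n × Fin m,
          u p.1 * v p.2 + u' p.1 * v' p.2 = (sR : ℂ) * (u'' p.1 * v'' p.2) := by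
        intro p
        have hxsum : (fun q : Fin n × Fin m => φ q.1 * ch q.2)
            = ((sR : ℂ))⁻¹ • ((fun q : Fin n × Fin m => φ q.1 * ψ q.2)
                + fun q : Fin n × Fin m => φ q.1 * ψ' q.2) := by
          funext q
          simp only [hchdef, hχdef, Pi.smul_apply, Pi.add_apply, smul_eq_mul]
          ring
        have e'' := hv2'' p
        rw [hxsum, mulVec_smul, mulVec_add] at e''
        simp only [Pi.smul_apply, Pi.add_apply, smul_eq_mul] at e''
        rw [hv2 p, hv2' p] at e''
        field_simp at e''
        linear_combination e''
      obtain ⟨k, l, hD⟩ : ∃ k l, v k * v' l - v l * v' k ≠ 0 := by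
        by_contra hcz
        push_neg at hcz
        obtain ⟨k₀, hk₀⟩ := exists_ne_zero_of_dot_one' v hv1
        apply hvpar
        refine ⟨v' k₀ / v k₀, ?_⟩
        funext k
        have hkk := hcz k k₀
        simp only [Pi.smul_apply, smul_eq_mul]
        rw [div_mul_eq_mul_div, eq_div_iff hk₀]
        linear_combination -hkk
      have hui : ∀ i, u i * (v k * v' l - v l * v' k)
          = (sR : ℂ) * u'' i * (v'' k * v' l - v'' l * v' k) := by
        intro i
        have e1 := rel (i, k)
        have e2 := rel (i, l)
        simp only at e1 e2
        linear_combination e1 * v' l - e2 * v' k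
      have hui' : ∀ i, u' i * (v k * v' l - v l * v' k)
          = -((sR : ℂ) * u'' i * (v'' k * v l - v'' l * v k)) := by
        intro i
        have e1 := rel (i, k)
        have e2 := rel (i, l)
        simp only at e1 e2
        linear_combination e2 * v k - e1 * v l
      obtain ⟨i₁, hi₁⟩ := exists_ne_zero_of_dot_one' u hu
      have hA : v'' k * v' l - v'' l * v' k ≠ 0 := by
        intro h0
        have hcontr := hui i₁
        rw [h0, mul_zero] at hcontr
        exact mul_ne_zero hi₁ hD hcontr
      refine ⟨-(v'' k * v l - v'' l * v k) / (v'' k * v' l - v'' l * v' k), ?_⟩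
      funext i
      have hzero : (v k * v' l - v l * v' k)
          * (u' i * (v'' k * v' l - v'' l * v' k) + u i * (v'' k * v l - v'' l * v k)) = 0 := by
        linear_combination (v'' k * v' l - v'' l * v' k) * hui' i
          + (v'' k * v l - v'' l * v k) * hui i
      have key : u' i * (v'' k * v' l - v'' l * v' k)
          + u i * (v'' k * v l - v'' l * v k) = 0 := by
        rcases mul_eq_zero.mp hzero with h0 | h0
        · exact absurd h0 hD
        · exact h0
      simp only [Pi.smul_apply, smul_eq_mul]
      rw [div_mul_eq_mul_div, eq_div_iff hA]
      linear_combination key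
end
end

section
/- Let d ≥ 2. There do not exist unitary matrices W, V ∈ M_d(ℂ) such that for every unitary matrix U ∈ M_d(ℂ) there is a complex number c (depending on U) with W Ū V = c · U†, where Ū denotes the entrywise complex conjugate of U. -/
open scoped ComplexOrder Kronecker
open Matrix

noncomputable section

/-- For `d ≥ 2`, there are no fixed unitaries `W`, `V` with `W Ū V = c·U†` (for some
phase `c` depending on `U`) for every unitary `U`, where `Ū = (U†)ᵀ` is the entrywise
complex conjugate. -/
theorem no_sandwich_conjugate (d : ℕ) (hd : 2 ≤ d) :
    ¬ ∃ W ∈ Matrix.unitaryGroup (Fin d) ℂ, ∃ V ∈ Matrix.unitaryGroup (Fin d) ℂ,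
        ∀ U ∈ Matrix.unitaryGroup (Fin d) ℂ, ∃ c : ℂ, W * (Uᴴ)ᵀ * V = c • Uᴴ := by
  rintro ⟨W, hW, V, hV, h⟩
  obtain ⟨hW1, hW2⟩ : star W * W = 1 ∧ W * star W = 1 := Unitary.mem_iff.mp hW
  obtain ⟨hV1, hV2⟩ : star V * V = 1 ∧ V * star V = 1 := Unitary.mem_iff.mp hV
  set i0 : Fin d := ⟨0, by omega⟩ with hi0
  set i1 : Fin d := ⟨1, by omega⟩ with hi1
  have hne : i0 ≠ i1 := by simp [hi0, hi1, Fin.ext_iff]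
  -- restated hypothesis
  have h' : ∀ X ∈ Matrix.unitaryGroup (Fin d) ℂ, ∃ c : ℂ, W * Xᵀ * V = c • X := by
    intro X hX
    obtain ⟨c, hc⟩ := h (star X) (Unitary.star_mem hX)
    exact ⟨c, by simpa [Matrix.star_eq_conjTranspose] using hc⟩
  -- nonvanishing helper
  have hnz : ∀ X ∈ Matrix.unitaryGroup (Fin d) ℂ, ∀ c : ℂ,
      W * Xᵀ * V = c • X → c ≠ 0 := by
    intro X hX c hc hc0
    rw [hc0, zero_smul] at hc
    have hXz : Xᵀ = 0 := by
      have : star W * (W * Xᵀ * V) * star V = Xᵀ := by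
        calc star W * (W * Xᵀ * V) * star V
            = (star W * W) * Xᵀ * (V * star V) := by noncomm_ring
          _ = Xᵀ := by rw [hW1, hV2, one_mul, mul_one]
      rw [hc] at this
      simpa using this.symm
    have hX0 : X = 0 := by
      have := congrArg Matrix.transpose hXz
      simpa using this
    obtain ⟨hX1, -⟩ := Unitary.mem_iff.mp hX
    rw [hX0] at hX1
    have : (0 : Matrix (Fin d) (Fin d) ℂ) i0 i0 = (1 : Matrix (Fin d) (Fin d) ℂ) i0 i0 := by
      rw [show (0 : Matrix (Fin d) (Fin d) ℂ) = 1 from by simpa using hX1]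
    simp [Matrix.one_apply] at this
  obtain ⟨c0, hc0⟩ := h' 1 (one_mem _)
  rw [Matrix.transpose_one, mul_one] at hc0
  have hVW : V * W = c0 • (1 : Matrix (Fin d) (Fin d) ℂ) := by
    calc V * W = (star W * W) * V * W := by rw [hW1, one_mul]
      _ = star W * (W * V) * W := by noncomm_ring
      _ = star W * (c0 • 1) * W := by rw [hc0]
      _ = c0 • (star W * W) := by
          rw [Matrix.mul_smul, Matrix.smul_mul, mul_one]
      _ = c0 • 1 := by rw [hW1]
  -- the two test unitaries
  set f : Fin d → ℂ := fun k => if k = i1 then Complex.I else 1 with hf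
  set X : Matrix (Fin d) (Fin d) ℂ := Matrix.diagonal f with hXdef
  set σ : Equiv.Perm (Fin d) := Equiv.swap i0 i1 with hσ
  set Y : Matrix (Fin d) (Fin d) ℂ := Matrix.of (fun i j => if σ i = j then (1:ℂ) else 0)
    with hYdef
  have hfu : ∀ k, f k * (starRingEnd ℂ) (f k) = 1 := by
    intro k
    by_cases hk : k = i1 <;> simp [hf, hk, Complex.mul_conj, Complex.normSq_I]
  have hXmem : X ∈ Matrix.unitaryGroup (Fin d) ℂ := by
    rw [Matrix.mem_unitaryGroup_iff]
    rw [hXdef, Matrix.star_eq_conjTranspose, Matrix.diagonal_conjTranspose,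
      Matrix.diagonal_mul_diagonal]
    ext i j
    by_cases hij : i = j <;>
      simp [Matrix.diagonal_apply, Matrix.one_apply, hij, hfu, Pi.star_apply]
  have hYmem : Y ∈ Matrix.unitaryGroup (Fin d) ℂ := by
    rw [Matrix.mem_unitaryGroup_iff]
    ext i j
    rw [Matrix.mul_apply]
    simp only [hYdef, Matrix.star_apply, Matrix.of_apply, apply_ite (star : ℂ → ℂ), star_one, star_zero,
      mul_ite, ite_mul, one_mul, mul_one, mul_zero, zero_mul]
    rw [Finset.sum_ite_eq Finset.univ (σ j)]
    simp [Matrix.one_apply, σ.injective.eq_iff, eq_comm]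
  obtain ⟨cX, hXeq⟩ := h' X hXmem
  obtain ⟨cY, hYeq⟩ := h' Y hYmem
  obtain ⟨cXY, hXYeq⟩ := h' (X * Y) (mul_mem hXmem hYmem)
  -- key identity
  have key : (cY * cX) • (Y * X) = (c0 * cXY) • (X * Y) := by
    have e1 : (W * Yᵀ * V) * (W * Xᵀ * V) = (cY • Y) * (cX • X) := by rw [hYeq, hXeq]
    have e2 : (W * Yᵀ * V) * (W * Xᵀ * V) = c0 • (W * (X * Y)ᵀ * V) := by
      calc (W * Yᵀ * V) * (W * Xᵀ * V) = W * Yᵀ * (V * W) * Xᵀ * V := by noncomm_ring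
        _ = W * Yᵀ * (c0 • 1) * Xᵀ * V := by rw [hVW]
        _ = c0 • (W * (Yᵀ * Xᵀ) * V) := by
            rw [Matrix.mul_smul, Matrix.smul_mul, Matrix.smul_mul, mul_one]
            noncomm_ring
        _ = c0 • (W * (X * Y)ᵀ * V) := by rw [Matrix.transpose_mul]
    rw [e1, hXYeq, smul_smul, Matrix.smul_mul, Matrix.mul_smul, smul_smul] at e2
    simpa using e2
  -- evaluate entries
  have hY01 : Y i0 i1 = 1 := by simp [hYdef, hσ]
  have hY10 : Y i1 i0 = 1 := by simp [hYdef, hσ]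
  have hXY01 : (X * Y) i0 i1 = 1 := by
    rw [hXdef, Matrix.diagonal_mul, hY01, hf]
    simp [hne]
  have hXY10 : (X * Y) i1 i0 = Complex.I := by
    rw [hXdef, Matrix.diagonal_mul, hY10, hf]
    simp
  have hYX01 : (Y * X) i0 i1 = Complex.I := by
    rw [hXdef, Matrix.mul_diagonal, hY01, hf]
    simp
  have hYX10 : (Y * X) i1 i0 = 1 := by
    rw [hXdef, Matrix.mul_diagonal, hY10, hf]
    simp [hne]
  have e01 : (cY * cX) * Complex.I = c0 * cXY := by
    have := congrArg (fun M => M i0 i1) key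
    simpa [Matrix.smul_apply, hYX01, hXY01, smul_eq_mul] using this
  have e10 : (cY * cX) = (c0 * cXY) * Complex.I := by
    have := congrArg (fun M => M i1 i0) key
    simpa [Matrix.smul_apply, hYX10, hXY10, smul_eq_mul] using this
  have hz : cY * cX = 0 := by
    have : cY * cX = -(cY * cX) := by
      calc cY * cX = (c0 * cXY) * Complex.I := e10
        _ = (cY * cX) * Complex.I * Complex.I := by rw [e01]
        _ = -(cY * cX) := by rw [mul_assoc, Complex.I_mul_I, mul_neg_one]
    linear_combination this / 2
  rcases mul_eq_zero.mp hz with hzz | hzz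
  · exact hnz Y hYmem cY hYeq hzz
  · exact hnz X hXmem cX hXeq hzz
end
end
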